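/- Let F_1, F_2 ∈ F^n have radial functions ρ_1, ρ_2 and support functions h_1, h_2 respectively. If ρ_2(x) ≤ ρ_1(x) for all x ∈ S^n, then h_2(N) ≤ h_1(N) for all N ∈ S^n; and if additionally ρ_2 is not identically equal to ρ_1, then there exists N̄ ∈ S^n with h_2(N̄) < h_1(N̄), and the set {N ∈ S^n : h_2(N) < h_1(N)} has positive σ-measure. -/

import Mathlib

open MeasureTheory Set
open scoped ENNReal RealInnerProductSpace NNReal

noncomputable section

/-- Euclidean space `ℝ^{n+1}`. -/
abbrev Euc (n : ℕ) : Type := EuclideanSpace ℝ (Fin (n + 1))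

/-- The unit sphere `S^n ⊂ ℝ^{n+1}` centered at the origin. -/
def uSphere (n : ℕ) : Set (Euc n) := Metric.sphere (0 : Euc n) 1

/-- The standard `n`-dimensional (Lebesgue/Hausdorff) measure `σ` on `S^n`. -/
def sphMeasure (n : ℕ) : Measure (Euc n) :=
  (μH[n] : Measure (Euc n)).restrict (uSphere n)

/-- A closed convex hypersurface `F ∈ 𝓕ⁿ` is the boundary of a compact convex set
containing the origin in its interior; we record the bounded convex body. -/
structure ConvexBodyO (n : ℕ) where
  carrier : Set (Euc n)
  isCompact : IsCompact carrier
  convex : Convex ℝ carrier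
  zero_mem_interior : (0 : Euc n) ∈ interior carrier

/-- The radial function `ρ` of `F`: `ρ(x) x ∈ F` for `x ∈ S^n`. -/
def radialFn {n : ℕ} (B : ConvexBodyO n) (x : Euc n) : ℝ :=
  sSup {t : ℝ | 0 ≤ t ∧ t • x ∈ B.carrier}

/-- The support function `h(N) = sup_{x ∈ S^n} ρ(x)⟨x,N⟩`. -/
def supportFn {n : ℕ} (B : ConvexBodyO n) (N : Euc n) : ℝ :=
  sSup ((fun x => radialFn B x * ⟪x, N⟫) '' uSphere n)

/-- The generalized Gauss map: `α_F(x)` is the set of outward unit normals of hyperplanes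
supporting `F` at `ρ(x)x`. -/
def gaussMap {n : ℕ} (B : ConvexBodyO n) (x : Euc n) : Set (Euc n) :=
  {N ∈ uSphere n | ∀ y ∈ B.carrier, ⟪y, N⟫ ≤ ⟪radialFn B x • x, N⟫}

/-- `α_F(ω) = ⋃_{x ∈ ω} α_F(x)`. -/
def gaussImage {n : ℕ} (B : ConvexBodyO n) (ω : Set (Euc n)) : Set (Euc n) :=
  ⋃ x ∈ ω, gaussMap B x

/-- A subset `ω ⊆ S^n` is spherically convex if the cone over `ω` with vertex at `O`
is convex. -/
def SphericallyConvex (n : ℕ) (ω : Set (Euc n)) : Prop :=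
  ω ⊆ uSphere n ∧ Convex ℝ {y : Euc n | ∃ t : ℝ, 0 ≤ t ∧ ∃ x ∈ ω, y = t • x}

/-- The dual set `ω* = {y ∈ S^n : ⟨x,y⟩ ≤ 0 ∀ x ∈ ω}`. -/
def dualSet (n : ℕ) (ω : Set (Euc n)) : Set (Euc n) :=
  {y ∈ uSphere n | ∀ x ∈ ω, ⟪x, y⟫ ≤ 0}

lemma zero_mem {n : ℕ} (B : ConvexBodyO n) : (0 : Euc n) ∈ B.carrier :=
  interior_subset B.zero_mem_interior

lemma exists_bound {n : ℕ} (B : ConvexBodyO n) : ∃ R : ℝ, 0 < R ∧ ∀ y ∈ B.carrier, ‖y‖ ≤ R := by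
  obtain ⟨R, hR⟩ := B.isCompact.isBounded.subset_closedBall 0
  exact ⟨max R 1, lt_of_lt_of_le one_pos (le_max_right _ _), fun y hy => le_trans
    (by simpa [Metric.mem_closedBall, dist_eq_norm] using hR hy) (le_max_left _ _)⟩

lemma radial_set_bddAbove {n : ℕ} (B : ConvexBodyO n) {x : Euc n} (hx : ‖x‖ = 1) :
    BddAbove {t : ℝ | 0 ≤ t ∧ t • x ∈ B.carrier} := by
  obtain ⟨R, hR0, hR⟩ := exists_bound B
  refine ⟨R, fun t ht => ?_⟩
  have := hR _ ht.2
  rwa [norm_smul, hx, mul_one, Real.norm_eq_abs, abs_of_nonneg ht.1] at this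

lemma radial_pos {n : ℕ} (B : ConvexBodyO n) {x : Euc n} (hx : ‖x‖ = 1) :
    0 < radialFn B x := by
  obtain ⟨δ, hδ, hball⟩ := Metric.isOpen_iff.1 isOpen_interior 0 B.zero_mem_interior
  have hmem : (δ/2) • x ∈ B.carrier := by
    apply interior_subset; apply hball
    simp only [Metric.mem_ball, dist_eq_norm, sub_zero, norm_smul, hx, mul_one, Real.norm_eq_abs]
    rw [abs_of_pos (half_pos hδ)]; exact half_lt_self hδ
  have : δ/2 ≤ radialFn B x :=
    le_csSup (radial_set_bddAbove B hx) ⟨(half_pos hδ).le, hmem⟩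
  linarith [half_pos hδ]

lemma radial_mem {n : ℕ} (B : ConvexBodyO n) {x : Euc n} (hx : ‖x‖ = 1) :
    radialFn B x • x ∈ B.carrier := by
  have h1 : IsClosed {t : ℝ | t • x ∈ B.carrier} :=
    B.isCompact.isClosed.preimage (by continuity)
  have hclosed : IsClosed {t : ℝ | 0 ≤ t ∧ t • x ∈ B.carrier} := by
    have : {t : ℝ | 0 ≤ t ∧ t • x ∈ B.carrier} = Ici 0 ∩ {t : ℝ | t • x ∈ B.carrier} := by
      ext t; simp [Set.mem_Ici, and_comm]
    rw [this]; exact isClosed_Ici.inter h1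
  obtain ⟨R, hR0, hR⟩ := exists_bound B
  have hbdd : Bornology.IsBounded {t : ℝ | 0 ≤ t ∧ t • x ∈ B.carrier} := by
    apply (Metric.isBounded_Icc 0 R).subset
    intro t ht
    refine ⟨ht.1, ?_⟩
    have := hR _ ht.2
    rwa [norm_smul, hx, mul_one, Real.norm_eq_abs, abs_of_nonneg ht.1] at this
  have hcpt : IsCompact {t : ℝ | 0 ≤ t ∧ t • x ∈ B.carrier} :=
    Metric.isCompact_of_isClosed_isBounded hclosed hbdd
  have := hcpt.sSup_mem ⟨0, le_refl 0, by simpa using zero_mem B⟩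
  exact this.2

lemma radial_le_bound {n : ℕ} (B : ConvexBodyO n) {R : ℝ} (hR : ∀ y ∈ B.carrier, ‖y‖ ≤ R)
    {x : Euc n} (hx : ‖x‖ = 1) : radialFn B x ≤ R := by
  refine csSup_le ⟨0, le_refl 0, by simpa using zero_mem B⟩ fun t ht => ?_
  have := hR _ ht.2
  rwa [norm_smul, hx, mul_one, Real.norm_eq_abs, abs_of_nonneg ht.1] at this

lemma mem_uSphere_iff {n : ℕ} {x : Euc n} : x ∈ uSphere n ↔ ‖x‖ = 1 := by
  simp [uSphere]

lemma uSphere_nonempty {n : ℕ} : (uSphere n).Nonempty :=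
  ⟨EuclideanSpace.single 0 1, mem_uSphere_iff.2 (by simp)⟩

lemma supportFn_bddAbove {n : ℕ} (B : ConvexBodyO n) (N : Euc n) :
    BddAbove ((fun x => radialFn B x * ⟪x, N⟫) '' uSphere n) := by
  obtain ⟨R, hR0, hR⟩ := exists_bound B
  refine ⟨R * ‖N‖, ?_⟩
  rintro - ⟨x, hx, rfl⟩
  have hx1 := mem_uSphere_iff.1 hx
  have h1 : radialFn B x ≤ R := radial_le_bound B hR hx1
  have h2 : ⟪x, N⟫ ≤ ‖N‖ := by
    calc ⟪x, N⟫ ≤ ‖x‖ * ‖N‖ := real_inner_le_norm x N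
    _ = ‖N‖ := by rw [hx1, one_mul]
  calc radialFn B x * ⟪x, N⟫ ≤ radialFn B x * ‖N‖ :=
        mul_le_mul_of_nonneg_left h2 (radial_pos B hx1).le
    _ ≤ R * ‖N‖ := mul_le_mul_of_nonneg_right h1 (norm_nonneg N)

lemma le_supportFn {n : ℕ} (B : ConvexBodyO n) (N : Euc n) {x : Euc n} (hx : x ∈ uSphere n) :
    radialFn B x * ⟪x, N⟫ ≤ supportFn B N :=
  le_csSup (supportFn_bddAbove B N) ⟨x, hx, rfl⟩

lemma supportFn_pos {n : ℕ} (B : ConvexBodyO n) {N : Euc n} (hN : N ∈ uSphere n) :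
    0 < supportFn B N := by
  have hN1 := mem_uSphere_iff.1 hN
  have : radialFn B N * ⟪N, N⟫ ≤ supportFn B N := le_supportFn B N hN
  rw [real_inner_self_eq_norm_sq, hN1] at this
  simpa using lt_of_lt_of_le (by simpa using radial_pos B hN1) this

lemma supportFn_le {n : ℕ} (B : ConvexBodyO n) (N : Euc n) {c : ℝ}
    (h : ∀ y ∈ B.carrier, ⟪y, N⟫ ≤ c) : supportFn B N ≤ c := by
  apply csSup_le (uSphere_nonempty.image _)
  rintro - ⟨x, hx, rfl⟩
  have := h _ (radial_mem B (mem_uSphere_iff.1 hx))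
  rwa [real_inner_smul_left] at this

lemma supportFn_mono {n : ℕ} (B₁ B₂ : ConvexBodyO n)
    (hle : ∀ x ∈ uSphere n, radialFn B₂ x ≤ radialFn B₁ x)
    {N : Euc n} (hN : N ∈ uSphere n) : supportFn B₂ N ≤ supportFn B₁ N := by
  apply csSup_le (uSphere_nonempty.image _)
  rintro - ⟨x, hx, rfl⟩
  rcases le_or_gt 0 ⟪x, N⟫ with h | h
  · calc radialFn B₂ x * ⟪x, N⟫ ≤ radialFn B₁ x * ⟪x, N⟫ :=
        mul_le_mul_of_nonneg_right (hle x hx) h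
      _ ≤ supportFn B₁ N := le_supportFn B₁ N hx
  · exact le_trans (mul_nonpos_of_nonneg_of_nonpos (radial_pos B₂ (mem_uSphere_iff.1 hx)).le h.le)
      (supportFn_pos B₁ hN).le

lemma supportFn_lipschitz {n : ℕ} (B : ConvexBodyO n) : Continuous (supportFn B) := by
  obtain ⟨R, hR0, hR⟩ := exists_bound B
  have key : ∀ N M : Euc n, supportFn B N ≤ supportFn B M + R * dist N M := by
    intro N M
    apply csSup_le (uSphere_nonempty.image _)
    rintro - ⟨x, hx, rfl⟩
    have hx1 := mem_uSphere_iff.1 hx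
    have h1 : ⟪x, N⟫ = ⟪x, M⟫ + ⟪x, N - M⟫ := by rw [← inner_add_right, add_sub_cancel]
    have h2 : radialFn B x * ⟪x, N - M⟫ ≤ R * dist N M := by
      rw [dist_eq_norm]
      calc radialFn B x * ⟪x, N - M⟫ ≤ radialFn B x * ‖N - M‖ := by
            apply mul_le_mul_of_nonneg_left _ (radial_pos B hx1).le
            calc ⟪x, N - M⟫ ≤ ‖x‖ * ‖N - M‖ := real_inner_le_norm _ _
              _ = ‖N - M‖ := by rw [hx1, one_mul]
        _ ≤ R * ‖N - M‖ := mul_le_mul_of_nonneg_right (radial_le_bound B hR hx1) (norm_nonneg _)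
    calc radialFn B x * ⟪x, N⟫ = radialFn B x * ⟪x, M⟫ + radialFn B x * ⟪x, N - M⟫ := by
          rw [h1]; ring
      _ ≤ supportFn B M + R * dist N M := add_le_add (le_supportFn B M hx) h2
  exact (LipschitzWith.of_le_add_mul' R key).continuous

lemma exists_strict {n : ℕ} (B₁ B₂ : ConvexBodyO n) {x₀ : Euc n} (hx₀ : x₀ ∈ uSphere n)
    (hlt : radialFn B₂ x₀ < radialFn B₁ x₀) :
    ∃ N ∈ uSphere n, supportFn B₂ N < supportFn B₁ N := by
  have hx1 := mem_uSphere_iff.1 hx₀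
  set p := radialFn B₁ x₀ • x₀ with hp_def
  have hpnot : p ∉ B₂.carrier := by
    intro hp
    have : radialFn B₁ x₀ ≤ radialFn B₂ x₀ :=
      le_csSup (radial_set_bddAbove B₂ hx1) ⟨(radial_pos B₁ hx1).le, hp⟩
    linarith
  obtain ⟨f, c, hfs, hfp⟩ :=
    geometric_hahn_banach_closed_point B₂.convex B₂.isCompact.isClosed hpnot
  set v := (InnerProductSpace.toDual ℝ (Euc n)).symm f with hv_def
  have hv : ∀ y, ⟪v, y⟫ = f y := fun y => InnerProductSpace.toDual_symm_apply
  have hf0 : f 0 = 0 := map_zero f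
  have hc0 : 0 < c := hf0 ▸ hfs 0 (zero_mem B₂)
  have hvne : v ≠ 0 := by
    intro h
    have : f p = 0 := by rw [← hv]; simp [h]
    linarith
  have hvnorm : 0 < ‖v‖ := norm_pos_iff.2 hvne
  refine ⟨‖v‖⁻¹ • v, mem_uSphere_iff.2 (by
    rw [norm_smul, Real.norm_eq_abs, abs_of_pos (inv_pos.2 hvnorm), inv_mul_cancel₀ hvnorm.ne']), ?_⟩
  have h2 : supportFn B₂ (‖v‖⁻¹ • v) ≤ ‖v‖⁻¹ * c := by
    apply supportFn_le
    intro y hy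
    rw [real_inner_smul_right, real_inner_comm, hv]
    exact mul_le_mul_of_nonneg_left (hfs y hy).le (inv_pos.2 hvnorm).le
  have h1 : ‖v‖⁻¹ * f p ≤ supportFn B₁ (‖v‖⁻¹ • v) := by
    have := le_supportFn B₁ (‖v‖⁻¹ • v) hx₀
    rwa [real_inner_smul_right, ← mul_assoc, mul_comm (radialFn B₁ x₀) ‖v‖⁻¹, mul_assoc,
      ← real_inner_smul_left, ← hp_def, real_inner_comm, hv] at this
  calc supportFn B₂ (‖v‖⁻¹ • v) ≤ ‖v‖⁻¹ * c := h2
    _ < ‖v‖⁻¹ * f p := by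
        exact mul_lt_mul_of_pos_left hfp (inv_pos.2 hvnorm)
    _ ≤ supportFn B₁ (‖v‖⁻¹ • v) := h1

lemma euc_ball_pos (d : ℕ) {r : ℝ} (hr : 0 < r) :
    0 < μH[(d:ℝ)] (Metric.ball (0 : EuclideanSpace ℝ (Fin d)) r) := by
  set φ := WithLp.equiv 2 (Fin d → ℝ)
  have hlip : LipschitzWith 1 φ := PiLp.lipschitzWith_ofLp 2 _
  obtain ⟨K, hanti⟩ : ∃ K, AntilipschitzWith K φ := ⟨_, PiLp.antilipschitzWith_ofLp 2 _⟩
  set r' : ℝ := r / (K + 1) with hr'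
  have hK1 : (0:ℝ) < K + 1 := by positivity
  have hr'0 : 0 < r' := div_pos hr hK1
  have hsub : Metric.ball (0 : Fin d → ℝ) r' ⊆ φ '' Metric.ball 0 r := by
    intro x hx
    refine ⟨φ.symm x, ?_, by simp⟩
    rw [Metric.mem_ball] at hx ⊢
    calc dist (φ.symm x) 0 ≤ K * dist (φ (φ.symm x)) (φ 0) := hanti.le_mul_dist _ _
      _ = K * dist x 0 := by rw [Equiv.apply_symm_apply]; rfl
      _ ≤ K * r' := by
          exact mul_le_mul_of_nonneg_left hx.le (NNReal.coe_nonneg K)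
      _ < (K + 1) * r' := by nlinarith [NNReal.coe_nonneg K]
      _ = r := by rw [hr']; field_simp [hK1.ne']
  have hpi : 0 < μH[(d:ℝ)] (Metric.ball (0 : Fin d → ℝ) r') := by
    have hcard : (Fintype.card (Fin d) : ℝ) = (d : ℝ) := by simp
    rw [← hcard, hausdorffMeasure_pi_real]
    exact Metric.measure_ball_pos volume 0 hr'0
  have h1 : μH[(d:ℝ)] (Metric.ball (0 : Fin d → ℝ) r') ≤
      μH[(d:ℝ)] (φ '' Metric.ball 0 r) := measure_mono hsub
  have h2 : μH[(d:ℝ)] (φ '' Metric.ball 0 r) ≤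
      1 ^ (d:ℝ) * μH[(d:ℝ)] (Metric.ball (0 : EuclideanSpace ℝ (Fin d)) r) :=
    hlip.hausdorffMeasure_image_le (Nat.cast_nonneg d) _
  rw [ENNReal.one_rpow, one_mul] at h2
  exact lt_of_lt_of_le hpi (le_trans h1 h2)

lemma key_proj_ineq {E : Type*} [NormedAddCommGroup E] [InnerProductSpace ℝ E]
    {N : E} (hN : ‖N‖ = 1) (w : E) : ‖w - ⟪w, N⟫ • N‖ ≤ ‖w‖ := by
  have hsq : ‖w - ⟪w, N⟫ • N‖ ^ 2 = ‖w‖ ^ 2 - ⟪w, N⟫ ^ 2 := by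
    rw [norm_sub_sq_real, real_inner_smul_right, norm_smul, Real.norm_eq_abs, hN, mul_one,
      sq_abs]
    ring
  have h2 : ‖w - ⟪w, N⟫ • N‖ ^ 2 ≤ ‖w‖ ^ 2 := by rw [hsq]; nlinarith [sq_nonneg ⟪w, N⟫]
  have := Real.sqrt_le_sqrt h2
  rwa [Real.sqrt_sq (norm_nonneg _), Real.sqrt_sq (norm_nonneg _)] at this

lemma proj_lipschitz {E : Type*} [NormedAddCommGroup E] [InnerProductSpace ℝ E]
    {N : E} (hN : ‖N‖ = 1) : LipschitzWith 1 (fun y : E => y - (⟪y, N⟫ - 1) • N) := by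
  apply LipschitzWith.of_dist_le_mul
  intro y z
  rw [NNReal.coe_one, one_mul, dist_eq_norm, dist_eq_norm]
  have : (y - (⟪y, N⟫ - 1) • N) - (z - (⟪z, N⟫ - 1) • N) = (y - z) - ⟪y - z, N⟫ • N := by
    rw [inner_sub_left]; module
  rw [this]
  exact key_proj_ineq hN (y - z)

set_option maxHeartbeats 1000000 in
lemma cap_pos (n : ℕ) (hn : 1 ≤ n) {N : EuclideanSpace ℝ (Fin (n+1))} (hN : ‖N‖ = 1)
    {ε : ℝ} (hε0 : 0 < ε) (hε1 : ε ≤ 1/2) :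
    0 < μH[(n:ℝ)] (Metric.sphere (0 : EuclideanSpace ℝ (Fin (n+1))) 1 ∩ Metric.ball N ε) := by
  have hN0 : N ≠ 0 := by intro h; rw [h, norm_zero] at hN; norm_num at hN
  set W : Submodule ℝ (EuclideanSpace ℝ (Fin (n+1))) := (ℝ ∙ N)ᗮ with hW
  have hd : Module.finrank ℝ W = n := by
    have h1 : Module.finrank ℝ (ℝ ∙ N) = 1 := finrank_span_singleton hN0
    have h2 := Submodule.finrank_add_finrank_orthogonal
      (K := (ℝ ∙ N : Submodule ℝ (EuclideanSpace ℝ (Fin (n+1)))))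
    have h3 : Module.finrank ℝ (EuclideanSpace ℝ (Fin (n+1))) = n + 1 := finrank_euclideanSpace_fin
    rw [← hW] at h2
    omega
  set d := Module.finrank ℝ W with hd_def
  set L : EuclideanSpace ℝ (Fin d) ≃ₗᵢ[ℝ] W := (stdOrthonormalBasis ℝ W).repr.symm with hL
  set g : EuclideanSpace ℝ (Fin d) → EuclideanSpace ℝ (Fin (n+1)) :=
    fun v => N + ((L v : W) : EuclideanSpace ℝ (Fin (n+1))) with hg_def
  have hg : Isometry g := by
    apply Isometry.of_dist_eq
    intro v w
    rw [hg_def]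
    simp only
    rw [dist_add_left, ← Subtype.dist_eq, L.dist_map]
  set r : ℝ := ε / 2 with hr_def
  have hr0 : 0 < r := half_pos hε0
  have hr14 : r ≤ 1/4 := by rw [hr_def]; linarith
  set proj : EuclideanSpace ℝ (Fin (n+1)) → EuclideanSpace ℝ (Fin (n+1)) :=
    fun y => y - (⟪y, N⟫ - 1) • N with hproj
  have hsub : g '' Metric.ball 0 r ⊆
      proj '' (Metric.sphere (0 : EuclideanSpace ℝ (Fin (n+1))) 1 ∩ Metric.ball N ε) := by
    rintro - ⟨v, hv, rfl⟩
    set u : EuclideanSpace ℝ (Fin (n+1)) := ((L v : W) : EuclideanSpace ℝ (Fin (n+1))) with hu_def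
    have hu_orth : ⟪N, u⟫ = 0 := by
      exact (Submodule.mem_orthogonal _ _).1 (L v).2 N (Submodule.mem_span_singleton_self N)
    have hs_lt : ‖u‖ < r := by
      have h5 : ‖u‖ = ‖v‖ := by rw [hu_def, ← Submodule.coe_norm, L.norm_map]
      rw [h5]
      simpa [dist_eq_norm] using hv
    set s : ℝ := ‖u‖ with hs_def
    have hs0 : 0 ≤ s := norm_nonneg _
    have hs14 : s < 1/4 := lt_of_lt_of_le hs_lt hr14
    have h1s : 0 ≤ 1 - s^2 := by nlinarith
    have h1s1 : 1 - s^2 ≤ 1 := by nlinarith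
    set c : ℝ := Real.sqrt (1 - s^2) with hc_def
    have hc2 : c^2 = 1 - s^2 := Real.sq_sqrt h1s
    have hc0 : 0 ≤ c := Real.sqrt_nonneg _
    have hc1 : c ≤ 1 := by nlinarith
    have hclb : 1 - s^2 ≤ c := by
      nlinarith [mul_nonneg hc0 (sub_nonneg.2 hc1), hc2]
    set y : EuclideanSpace ℝ (Fin (n+1)) := c • N + u with hy_def
    have hyN : ⟪y, N⟫ = c := by
      rw [hy_def, inner_add_left, real_inner_smul_left, real_inner_self_eq_norm_sq, hN,
        real_inner_comm, hu_orth]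
      ring
    have hynorm : ‖y‖ = 1 := by
      have hsq : ‖y‖^2 = 1 := by
        rw [hy_def, norm_add_sq_real, real_inner_smul_left, hu_orth, norm_smul,
          Real.norm_eq_abs, abs_of_nonneg hc0, hN, ← hs_def]
        nlinarith
      rw [← Real.sqrt_sq (norm_nonneg y), hsq, Real.sqrt_one]
    have hyball : y ∈ Metric.ball N ε := by
      rw [Metric.mem_ball, dist_eq_norm]
      have heq : y - N = (c - 1) • N + u := by rw [hy_def]; module
      have hsq : ‖y - N‖^2 = (c-1)^2 + s^2 := by
        rw [heq, norm_add_sq_real, real_inner_smul_left, hu_orth, norm_smul,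
          Real.norm_eq_abs, hN, ← hs_def]
        rw [mul_one, sq_abs]
        ring
      have hlt : ‖y - N‖^2 < ε^2 := by
        rw [hsq]
        have h1 : (c-1)^2 ≤ s^4 := by nlinarith
        have h6 : s < ε/2 := hs_lt
        nlinarith
      calc ‖y - N‖ = Real.sqrt (‖y - N‖^2) := (Real.sqrt_sq (norm_nonneg _)).symm
        _ < Real.sqrt (ε^2) := Real.sqrt_lt_sqrt (sq_nonneg _) hlt
        _ = ε := Real.sqrt_sq hε0.le
    refine ⟨y, ⟨by simpa [mem_sphere_zero_iff_norm] using hynorm, hyball⟩, ?_⟩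
    rw [hproj]
    simp only
    rw [hyN, hg_def]
    simp only
    rw [hy_def, ← hu_def]
    module
  have hlip : LipschitzWith 1 proj := proj_lipschitz hN
  have h0 : 0 < μH[(n:ℝ)] (Metric.ball (0 : EuclideanSpace ℝ (Fin d)) r) := by
    have h := euc_ball_pos d hr0
    rwa [show ((d:ℝ)) = (n:ℝ) by rw [hd]] at h
  have h1 : μH[(n:ℝ)] (g '' Metric.ball 0 r) =
      μH[(n:ℝ)] (Metric.ball (0 : EuclideanSpace ℝ (Fin d)) r) :=
    hg.hausdorffMeasure_image (Or.inl (Nat.cast_nonneg n)) _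
  have h2 : μH[(n:ℝ)] (g '' Metric.ball 0 r) ≤
      μH[(n:ℝ)] (proj '' (Metric.sphere (0 : EuclideanSpace ℝ (Fin (n+1))) 1 ∩ Metric.ball N ε)) :=
    measure_mono hsub
  have h3 : μH[(n:ℝ)]
        (proj '' (Metric.sphere (0 : EuclideanSpace ℝ (Fin (n+1))) 1 ∩ Metric.ball N ε)) ≤
      1 ^ (n:ℝ) * μH[(n:ℝ)] (Metric.sphere (0 : EuclideanSpace ℝ (Fin (n+1))) 1 ∩ Metric.ball N ε) :=
    hlip.hausdorffMeasure_image_le (Nat.cast_nonneg n) _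
  rw [ENNReal.one_rpow, one_mul] at h3
  calc (0:ℝ≥0∞) < μH[(n:ℝ)] (Metric.ball (0 : EuclideanSpace ℝ (Fin d)) r) := h0
    _ = μH[(n:ℝ)] (g '' Metric.ball 0 r) := h1.symm
    _ ≤ _ := le_trans h2 h3

set_option maxHeartbeats 1000000 in
/-- Monotonicity of support functions under pointwise comparison of radial functions:
`ρ₂ ≤ ρ₁` on `S^n` implies `h₂ ≤ h₁` on `S^n`; and if moreover `ρ₂ ≢ ρ₁`, then `h₂ < h₁`
at some `N̄ ∈ S^n`, and `{N ∈ S^n : h₂(N) < h₁(N)}` has positive `σ`-measure. -/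
theorem statement16 (n : ℕ) (hn : 1 ≤ n) (B₁ B₂ : ConvexBodyO n)
    (hle : ∀ x ∈ uSphere n, radialFn B₂ x ≤ radialFn B₁ x) :
    (∀ N ∈ uSphere n, supportFn B₂ N ≤ supportFn B₁ N) ∧
    ((¬ ∀ x ∈ uSphere n, radialFn B₂ x = radialFn B₁ x) →
      (∃ N ∈ uSphere n, supportFn B₂ N < supportFn B₁ N) ∧
      0 < sphMeasure n {N ∈ uSphere n | supportFn B₂ N < supportFn B₁ N}) := by
  refine ⟨fun N hN => supportFn_mono B₁ B₂ hle hN, fun hne => ?_⟩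
  push_neg at hne
  obtain ⟨x₀, hx₀, hne'⟩ := hne
  have hlt : radialFn B₂ x₀ < radialFn B₁ x₀ := lt_of_le_of_ne (hle x₀ hx₀) hne'
  obtain ⟨Nb, hNbs, hNb⟩ := exists_strict B₁ B₂ hx₀ hlt
  refine ⟨⟨Nb, hNbs, hNb⟩, ?_⟩
  have hUopen : IsOpen {N : Euc n | supportFn B₂ N < supportFn B₁ N} :=
    isOpen_lt (supportFn_lipschitz B₂) (supportFn_lipschitz B₁)
  obtain ⟨ε₀, hε₀, hball⟩ := Metric.isOpen_iff.1 hUopen Nb hNb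
  set ε : ℝ := min ε₀ (1/2) with hε_def
  have hε0 : 0 < ε := lt_min hε₀ (by norm_num)
  have hε1 : ε ≤ 1/2 := min_le_right _ _
  have hcap := cap_pos n hn (mem_uSphere_iff.1 hNbs) hε0 hε1
  have hsub : Metric.sphere (0 : Euc n) 1 ∩ Metric.ball Nb ε ⊆
      ({N ∈ uSphere n | supportFn B₂ N < supportFn B₁ N} ∩ uSphere n) := by
    rintro z ⟨hz1, hz2⟩
    have hzU : z ∈ {N : Euc n | supportFn B₂ N < supportFn B₁ N} :=
      hball (Metric.ball_subset_ball (min_le_left _ _) hz2)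
    exact ⟨⟨hz1, hzU⟩, hz1⟩
  have hrestr : sphMeasure n {N ∈ uSphere n | supportFn B₂ N < supportFn B₁ N} =
      μH[n] ({N ∈ uSphere n | supportFn B₂ N < supportFn B₁ N} ∩ uSphere n) := by
    have hmeas : MeasurableSet (uSphere n) := Metric.isClosed_sphere.measurableSet
    rw [sphMeasure, Measure.restrict_apply' hmeas]
  rw [hrestr]
  exact lt_of_lt_of_le hcap (measure_mono hsub)
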